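/- arXiv:2308.09562 — 5 statements merged into one kernel-verified Lean document; each statement's English description precedes it below -/
import Mathlib

section
/- For every integer p ≥ 11, setting k* = ⌊p/2⌋ − 1, for every integer k with 1 ≤ k ≤ p one has C(p,k)·(k*)² ≤ C(p,k*)·k²; that is, the maximum of C(p,k)/k² over k ∈ {1,…,p} is attained at k* = ⌊p/2 − 1⌋. -/
private lemma step_up (p k : ℕ) (h : (k+1)^3 ≤ (p-k)*k^2) :
    p.choose k * (k+1)^2 ≤ p.choose (k+1) * k^2 := by
  have key : p.choose k * (k+1)^2 * (k+1) ≤ p.choose (k+1) * k^2 * (k+1) := by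
    have id := Nat.choose_succ_right_eq p k
    calc p.choose k * (k+1)^2 * (k+1) = p.choose k * (k+1)^3 := by ring
    _ ≤ p.choose k * ((p-k)*k^2) := Nat.mul_le_mul_left _ h
    _ = (p.choose k * (p-k)) * k^2 := by ring
    _ = (p.choose (k+1) * (k+1)) * k^2 := by rw [← id]
    _ = p.choose (k+1) * k^2 * (k+1) := by ring
  exact Nat.le_of_mul_le_mul_right key (Nat.succ_pos k)

private lemma step_down (p k : ℕ) (h : (p-k)*k^2 ≤ (k+1)^3) :
    p.choose (k+1) * k^2 ≤ p.choose k * (k+1)^2 := by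
  have key : p.choose (k+1) * k^2 * (k+1) ≤ p.choose k * (k+1)^2 * (k+1) := by
    have id := Nat.choose_succ_right_eq p k
    calc p.choose (k+1) * k^2 * (k+1) = (p.choose (k+1) * (k+1)) * k^2 := by ring
    _ = (p.choose k * (p-k)) * k^2 := by rw [id]
    _ = p.choose k * ((p-k)*k^2) := by ring
    _ ≤ p.choose k * (k+1)^3 := Nat.mul_le_mul_left _ h
    _ = p.choose k * (k+1)^2 * (k+1) := by ring
  exact Nat.le_of_mul_le_mul_right key (Nat.succ_pos k)

private lemma arith_up (p k : ℕ) (hk : 1 ≤ k) (hp : 11 ≤ p) (h : 2*k+4 ≤ p) :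
    (k+1)^3 ≤ (p-k)*k^2 := by
  rcases le_or_gt k 3 with h3 | h3
  · interval_cases k <;> · ring_nf; omega
  · have h4 : k + 4 ≤ p - k := by omega
    calc (k+1)^3 ≤ (k+4)*k^2 := by nlinarith
    _ ≤ (p-k)*k^2 := Nat.mul_le_mul_right _ h4

private lemma arith_down (p k : ℕ) (h : p ≤ 2*k+3) :
    (p-k)*k^2 ≤ (k+1)^3 := by
  have h4 : p - k ≤ k + 3 := by omega
  calc (p-k)*k^2 ≤ (k+3)*k^2 := Nat.mul_le_mul_right _ h4
  _ ≤ (k+1)^3 := by nlinarith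

private lemma up (p : ℕ) (hp : 11 ≤ p) : ∀ d k, 1 ≤ k → k + d = p/2 - 1 →
    p.choose k * (p/2-1)^2 ≤ p.choose (p/2-1) * k^2 := by
  intro d
  induction d with
  | zero => intro k hk1 hk; simp at hk; rw [hk]
  | succ n ih =>
    intro k hk1 hk
    have hstep : p.choose k * (k+1)^2 ≤ p.choose (k+1) * k^2 :=
      step_up p k (arith_up p k hk1 hp (by omega))
    have ihk : p.choose (k+1) * (p/2-1)^2 ≤ p.choose (p/2-1) * (k+1)^2 :=
      ih (k+1) (by omega) (by omega)
    have key : p.choose k * (p/2-1)^2 * (k+1)^2 ≤ p.choose (p/2-1) * k^2 * (k+1)^2 := by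
      calc p.choose k * (p/2-1)^2 * (k+1)^2 = (p.choose k * (k+1)^2) * (p/2-1)^2 := by ring
      _ ≤ (p.choose (k+1) * k^2) * (p/2-1)^2 := Nat.mul_le_mul_right _ hstep
      _ = (p.choose (k+1) * (p/2-1)^2) * k^2 := by ring
      _ ≤ (p.choose (p/2-1) * (k+1)^2) * k^2 := Nat.mul_le_mul_right _ ihk
      _ = p.choose (p/2-1) * k^2 * (k+1)^2 := by ring
    exact Nat.le_of_mul_le_mul_right key (by positivity)

private lemma down (p : ℕ) (hp : 11 ≤ p) : ∀ d k, k = p/2 - 1 + d →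
    p.choose k * (p/2-1)^2 ≤ p.choose (p/2-1) * k^2 := by
  intro d
  induction d with
  | zero => intro k hk; rw [hk]; simp
  | succ n ih =>
    intro k hk
    obtain ⟨j, rfl⟩ : ∃ j, k = j + 1 := ⟨p/2-1+n, by omega⟩
    have hj : j = p/2 - 1 + n := by omega
    have hstep : p.choose (j+1) * j^2 ≤ p.choose j * (j+1)^2 :=
      step_down p j (arith_down p j (by omega))
    have ihj : p.choose j * (p/2-1)^2 ≤ p.choose (p/2-1) * j^2 := ih j hj
    have hjpos : 1 ≤ j := by omega
    have key : p.choose (j+1) * (p/2-1)^2 * j^2 ≤ p.choose (p/2-1) * (j+1)^2 * j^2 := by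
      calc p.choose (j+1) * (p/2-1)^2 * j^2 = (p.choose (j+1) * j^2) * (p/2-1)^2 := by ring
      _ ≤ (p.choose j * (j+1)^2) * (p/2-1)^2 := Nat.mul_le_mul_right _ hstep
      _ = (p.choose j * (p/2-1)^2) * (j+1)^2 := by ring
      _ ≤ (p.choose (p/2-1) * j^2) * (j+1)^2 := Nat.mul_le_mul_right _ ihj
      _ = p.choose (p/2-1) * (j+1)^2 * j^2 := by ring
    exact Nat.le_of_mul_le_mul_right key (by positivity)

/-- For every integer p ≥ 11, setting k* = ⌊p/2⌋ − 1, for every integer k with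
1 ≤ k ≤ p one has C(p,k)·(k*)² ≤ C(p,k*)·k²; that is, the maximum of C(p,k)/k²
over k ∈ {1,…,p} is attained at k* = ⌊p/2 − 1⌋. -/
theorem stmt_3 (p k : ℕ) (hp : 11 ≤ p) (hk1 : 1 ≤ k) (hkp : k ≤ p) :
    p.choose k * (p / 2 - 1) ^ 2 ≤ p.choose (p / 2 - 1) * k ^ 2 := by
  rcases le_or_gt k (p/2-1) with h | h
  · exact up p hp (p/2-1-k) k hk1 (by omega)
  · exact down p hp (k - (p/2-1)) k (by omega)
end

section
/- For every integer p ≥ 9, every integer m ≥ 1, and k* defined as 3 if p ≤ 10 and ⌊p/2⌋ − 1 if p ≥ 11, set k₀ = min(m, k*). Then for every integer k with 1 ≤ k ≤ min(m, p), one has C(p,k)·k₀² ≤ C(p,k₀)·k². In particular, k ↦ C(p,k)/k² is non-decreasing on {1, …, k*}, so the maximum of C(p,k)/k² over 1 ≤ k ≤ m is attained at k = min(m, k*). -/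
lemma step_up_aux (p b : ℕ) (h : (b+1)^3 ≤ (p-b)*b^2) :
    p.choose b * (b+1)^2 ≤ p.choose (b+1) * b^2 := by
  have hc := Nat.choose_succ_right_eq p b
  have h1 : p.choose b * (b+1)^2 * (b+1) ≤ p.choose (b+1) * b^2 * (b+1) := by
    calc p.choose b * (b+1)^2 * (b+1) = p.choose b * (b+1)^3 := by ring
      _ ≤ p.choose b * ((p-b)*b^2) := Nat.mul_le_mul_left _ h
      _ = p.choose b * (p-b) * b^2 := by ring
      _ = p.choose (b+1) * (b+1) * b^2 := by rw [hc]
      _ = p.choose (b+1) * b^2 * (b+1) := by ring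
  exact Nat.le_of_mul_le_mul_right h1 (Nat.succ_pos b)

lemma step_down_aux (p b : ℕ) (h : (p-b)*b^2 ≤ (b+1)^3) :
    p.choose (b+1) * b^2 ≤ p.choose b * (b+1)^2 := by
  have hc := Nat.choose_succ_right_eq p b
  have h1 : p.choose (b+1) * b^2 * (b+1) ≤ p.choose b * (b+1)^2 * (b+1) := by
    calc p.choose (b+1) * b^2 * (b+1) = p.choose (b+1) * (b+1) * b^2 := by ring
      _ = p.choose b * (p-b) * b^2 := by rw [hc]
      _ = p.choose b * ((p-b)*b^2) := by ring
      _ ≤ p.choose b * (b+1)^3 := Nat.mul_le_mul_left _ h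
      _ = p.choose b * (b+1)^2 * (b+1) := by ring
  exact Nat.le_of_mul_le_mul_right h1 (Nat.succ_pos b)

lemma chain_up_aux (p kst a : ℕ) (ha : 1 ≤ a)
    (hcond : ∀ b, 1 ≤ b → b+1 ≤ kst → (b+1)^3 ≤ (p-b)*b^2) :
    ∀ d, a + d ≤ kst → p.choose a * (a+d)^2 ≤ p.choose (a+d) * a^2 := by
  intro d
  induction d with
  | zero => intro _; simp [Nat.mul_comm]
  | succ n ih =>
    intro hle
    have h1 := ih (by omega)
    have h2 := step_up_aux p (a+n) (hcond (a+n) (by omega) (by omega))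
    have key : p.choose a * (a+(n+1))^2 * (a+n)^2 ≤ p.choose (a+(n+1)) * a^2 * (a+n)^2 := by
      calc p.choose a * (a+(n+1))^2 * (a+n)^2
          = (p.choose a * (a+n)^2) * ((a+n)+1)^2 := by ring
        _ ≤ (p.choose (a+n) * a^2) * ((a+n)+1)^2 := Nat.mul_le_mul_right _ h1
        _ = (p.choose (a+n) * ((a+n)+1)^2) * a^2 := by ring
        _ ≤ (p.choose ((a+n)+1) * (a+n)^2) * a^2 := Nat.mul_le_mul_right _ h2
        _ = p.choose (a+(n+1)) * a^2 * (a+n)^2 := by ring_nf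
    exact Nat.le_of_mul_le_mul_right key (by positivity)

lemma chain_down_aux (p kst a : ℕ) (ha : 1 ≤ a)
    (hcond : ∀ b, kst ≤ b → (p-b)*b^2 ≤ (b+1)^3) (hak : kst ≤ a) :
    ∀ d, p.choose (a+d) * a^2 ≤ p.choose a * (a+d)^2 := by
  intro d
  induction d with
  | zero => simp [Nat.mul_comm]
  | succ n ih =>
    have h2 := step_down_aux p (a+n) (hcond (a+n) (by omega))
    have key : p.choose (a+(n+1)) * a^2 * (a+n)^2 ≤ p.choose a * (a+(n+1))^2 * (a+n)^2 := by
      calc p.choose (a+(n+1)) * a^2 * (a+n)^2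
          = (p.choose ((a+n)+1) * (a+n)^2) * a^2 := by ring_nf
        _ ≤ (p.choose (a+n) * ((a+n)+1)^2) * a^2 := Nat.mul_le_mul_right _ h2
        _ = (p.choose (a+n) * a^2) * ((a+n)+1)^2 := by ring
        _ ≤ (p.choose a * (a+n)^2) * ((a+n)+1)^2 := Nat.mul_le_mul_right _ ih
        _ = p.choose a * (a+(n+1))^2 * (a+n)^2 := by ring
    exact Nat.le_of_mul_le_mul_right key (by positivity)

lemma up_cond_aux (p kstar : ℕ) (hp : 9 ≤ p)
    (hkstar : kstar = if p ≤ 10 then 3 else p / 2 - 1) :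
    ∀ b, 1 ≤ b → b+1 ≤ kstar → (b+1)^3 ≤ (p-b)*b^2 := by
  intro b hb hbk
  by_cases h10 : p ≤ 10
  · rw [if_pos h10] at hkstar
    have hb2 : b ≤ 2 := by omega
    interval_cases b <;> · norm_num; omega
  · rw [if_neg h10] at hkstar
    have hp11 : 11 ≤ p := by omega
    have hpb : 2*b + 4 ≤ p := by omega
    rcases lt_or_ge b 4 with hb4 | hb4
    · interval_cases b <;> · norm_num; omega
    · obtain ⟨d, rfl⟩ : ∃ d, b = 4 + d := ⟨b - 4, by omega⟩
      obtain ⟨c, hc⟩ : ∃ c, p - (4+d) = c + (d + 8) := ⟨p - (4+d) - (d+8), by omega⟩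
      rw [hc]
      nlinarith [sq_nonneg d, Nat.zero_le c, Nat.zero_le d]

lemma down_cond_aux (p kstar : ℕ) (hp : 9 ≤ p)
    (hkstar : kstar = if p ≤ 10 then 3 else p / 2 - 1) :
    ∀ b, kstar ≤ b → (p-b)*b^2 ≤ (b+1)^3 := by
  intro b hbk
  by_cases hsp : p = 10 ∧ b = 3
  · obtain ⟨rfl, rfl⟩ := hsp; norm_num
  · have hple : p ≤ 2*b + 3 := by
      by_cases h10 : p ≤ 10
      · rw [if_pos h10] at hkstar; omega
      · rw [if_neg h10] at hkstar; omega
    calc (p-b)*b^2 ≤ (b+3)*b^2 := by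
          apply Nat.mul_le_mul_right; omega
      _ ≤ (b+1)^3 := by nlinarith [Nat.zero_le b]

/-- For every integer p ≥ 9, every integer m ≥ 1, with k* = 3 if p ≤ 10 and
k* = ⌊p/2⌋ − 1 if p ≥ 11, and k₀ = min(m, k*): for every integer k with
1 ≤ k ≤ min(m, p), one has C(p,k)·k₀² ≤ C(p,k₀)·k². In particular the maximum of
C(p,k)/k² over 1 ≤ k ≤ m is attained at k = min(m, k*). -/
theorem stmt_4 (p m k : ℕ) (hp : 9 ≤ p) (hm : 1 ≤ m)
    (kstar : ℕ) (hkstar : kstar = if p ≤ 10 then 3 else p / 2 - 1)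
    (k₀ : ℕ) (hk₀ : k₀ = min m kstar)
    (hk1 : 1 ≤ k) (hk : k ≤ min m p) :
    p.choose k * k₀ ^ 2 ≤ p.choose k₀ * k ^ 2 := by
  have hks3 : 3 ≤ kstar := by
    by_cases h10 : p ≤ 10
    · rw [if_pos h10] at hkstar; omega
    · rw [if_neg h10] at hkstar; omega
  rcases le_or_gt k k₀ with hle | hlt
  · -- increasing part: k ≤ k₀ ≤ kstar
    obtain ⟨d, rfl⟩ : ∃ d, k₀ = k + d := ⟨k₀ - k, by omega⟩
    exact chain_up_aux p kstar k hk1 (up_cond_aux p kstar hp hkstar) d (by omega)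
  · -- decreasing part: k₀ = kstar < k
    have hk₀' : k₀ = kstar := by omega
    subst hk₀'
    obtain ⟨d, rfl⟩ : ∃ d, k = k₀ + d := ⟨k - k₀, by omega⟩
    exact chain_down_aux p k₀ k₀ (by omega) (down_cond_aux p k₀ hp hkstar) le_rfl d
end

section
/- For every integer p ≥ 11, the integer k = ⌊p/2⌋ − 1 is the unique integer with 2 ≤ k ≤ p satisfying both p·k² < 2k³ + 3k² + 3k + 1 and p·(k−1)² > k³ + (k−1)³. -/
/-- For every integer p ≥ 11, the integer k = ⌊p/2⌋ − 1 is the unique integer with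
2 ≤ k ≤ p satisfying both p·k² < 2k³ + 3k² + 3k + 1 and p·(k−1)² > k³ + (k−1)³. -/
theorem stmt_9 (p : ℕ) (hp : 11 ≤ p) :
    ∀ k : ℕ,
      (2 ≤ k ∧ k ≤ p ∧ p * k ^ 2 < 2 * k ^ 3 + 3 * k ^ 2 + 3 * k + 1 ∧
        p * (k - 1) ^ 2 > k ^ 3 + (k - 1) ^ 3) ↔ k = p / 2 - 1 := by
  intro k
  constructor
  · rintro ⟨hk2, hkp, hA, hB⟩
    obtain ⟨m, rfl⟩ : ∃ m, k = m + 1 := ⟨k - 1, by omega⟩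
    simp only [Nat.add_sub_cancel] at hB
    have hm : 1 ≤ m := by omega
    have hk4 : 3 ≤ m := by
      by_contra h
      interval_cases m <;> [skip; skip] <;> nlinarith
    have h1 : p ≤ 2 * (m + 1) + 3 := by nlinarith
    have h2 : 2 * (m + 1) + 2 ≤ p := by nlinarith
    omega
  · intro hk
    subst hk
    have hk4 : 4 ≤ p / 2 - 1 := by omega
    obtain ⟨m, hm⟩ : ∃ m, p / 2 - 1 = m + 1 := ⟨p / 2 - 2, by omega⟩
    rw [hm]
    simp only [Nat.add_sub_cancel]
    have hcase : p = 2 * (m + 1) + 2 ∨ p = 2 * (m + 1) + 3 := by omega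
    have hm3 : 3 ≤ m := by omega
    rcases hcase with h | h <;> subst h <;>
      refine ⟨by omega, by omega, by nlinarith, by nlinarith⟩
end

section
/- For all integers j ≥ 1 and α ≥ j + 1: if α ≤ j + 3 then C(α−1, j) < (j+1)², while if α ≥ j + 4 then C(α−1, j) ≥ (j+1)², with equality in the second case if and only if j = 1 and α = 5. -/
lemma two_mul_choose (n : ℕ) : 2 * Nat.choose (n + 2) 2 = (n + 1) * (n + 2) := by
  induction n with
  | zero => rfl
  | succ n ih =>
    have h : Nat.choose (n + 3) 2 = Nat.choose (n + 2) 1 + Nat.choose (n + 2) 2 :=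
      Nat.choose_succ_succ (n + 2) 1
    rw [h, Nat.choose_one_right]
    nlinarith [ih]

lemma six_mul_choose (n : ℕ) : 6 * Nat.choose (n + 3) 3 = (n + 1) * (n + 2) * (n + 3) := by
  induction n with
  | zero => rfl
  | succ n ih =>
    have h : Nat.choose (n + 4) 3 = Nat.choose (n + 3) 2 + Nat.choose (n + 3) 3 :=
      Nat.choose_succ_succ (n + 3) 2
    have h2 := two_mul_choose (n + 1)
    rw [h]
    nlinarith [ih, h2]

lemma choose_sub3 (j : ℕ) : Nat.choose (j + 3) j = Nat.choose (j + 3) 3 := by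
  have := Nat.choose_symm (n := j + 3) (k := j) (by omega)
  simpa using this.symm

lemma choose_strict_mono (n j : ℕ) (hj : 1 ≤ j) (h : j ≤ n) :
    Nat.choose n j < Nat.choose (n + 1) j := by
  obtain ⟨k, rfl⟩ := Nat.exists_eq_add_of_le hj
  have h1 : Nat.choose (n + 1) (1 + k) = Nat.choose n k + Nat.choose n (1 + k) := by
    have := Nat.choose_succ_succ n k
    simpa [Nat.add_comm] using this
  have hpos : 0 < Nat.choose n k := Nat.choose_pos (by omega)
  omega

/-- For all integers j ≥ 1 and α ≥ j + 1: if α ≤ j + 3 then C(α−1, j) < (j+1)²,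
while if α ≥ j + 4 then C(α−1, j) ≥ (j+1)², with equality in the second case iff
j = 1 and α = 5. -/
theorem stmt_13 (j α : ℕ) (hj : 1 ≤ j) (hα : j + 1 ≤ α) :
    (α ≤ j + 3 → (α - 1).choose j < (j + 1) ^ 2) ∧
    (j + 4 ≤ α →
      (j + 1) ^ 2 ≤ (α - 1).choose j ∧
      ((α - 1).choose j = (j + 1) ^ 2 ↔ j = 1 ∧ α = 5)) := by
  have hkey : 6 * Nat.choose (j + 3) j = (j + 1) * (j + 2) * (j + 3) := by
    rw [choose_sub3]; exact six_mul_choose j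
  constructor
  · intro hle
    have hc : α = j + 1 ∨ α = j + 2 ∨ α = j + 3 := by omega
    rcases hc with rfl | rfl | rfl
    · simp only [Nat.add_sub_cancel, Nat.choose_self]
      nlinarith
    · have : j + 2 - 1 = j + 1 := by omega
      rw [this]
      have := Nat.choose_symm (n := j + 1) (k := j) (by omega)
      simp only [Nat.add_sub_cancel_left] at this
      rw [← this, Nat.choose_one_right]
      nlinarith
    · have : j + 3 - 1 = j + 2 := by omega
      rw [this]
      have hs := Nat.choose_symm (n := j + 2) (k := j) (by omega)
      have h2 : j + 2 - j = 2 := by omega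
      rw [h2] at hs
      rw [← hs]
      have := two_mul_choose j
      nlinarith
  · intro hge
    have hjj : 1 * j ≤ j * j := Nat.mul_le_mul_right j hj
    have hbase : (j + 1) ^ 2 ≤ Nat.choose (j + 3) j := by nlinarith [hkey, hjj]
    have hmono : ∀ m, j + 3 ≤ m → Nat.choose (j + 3) j ≤ Nat.choose m j :=
      fun m hm => Nat.choose_le_choose j hm
    have hle1 : Nat.choose (j + 3) j ≤ (α - 1).choose j := hmono _ (by omega)
    refine ⟨le_trans hbase hle1, ?_, ?_⟩
    · intro heq
      by_cases hα5 : α = j + 4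
      · have hj1 : j = 1 := by
          subst hα5
          have h1 : j + 4 - 1 = j + 3 := by omega
          rw [h1] at heq
          by_contra hne
          have hj2 : 2 ≤ j := by omega
          have h2j : 2 * j ≤ j * j := Nat.mul_le_mul_right j hj2
          nlinarith [hkey, heq, h2j]
        refine ⟨hj1, by omega⟩
      · exfalso
        have h5 : j + 5 ≤ α := by omega
        have hstep : Nat.choose (j + 3) j < Nat.choose (j + 4) j :=
          choose_strict_mono (j + 3) j hj (by omega)
        have hle2 : Nat.choose (j + 4) j ≤ (α - 1).choose j :=
          Nat.choose_le_choose j (by omega)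
        omega
    · rintro ⟨rfl, rfl⟩
      rfl
end

section
/- For every integer p ≥ 18, setting k* = ⌊p/2 − 5/4⌋ = ⌊(2p − 5)/4⌋, one has C(p,k)·(k*)³ ≤ C(p,k*)·k³ for every integer k with 1 ≤ k ≤ p; that is, the maximum of C(p,k)/k³ over k ∈ {1,…,p} is attained at k* = ⌊p/2 − 5/4⌋. -/
section aux

variable (p : ℕ)

private lemma arith_inc {p k : ℕ} (hp : 18 ≤ p) (hk1 : 1 ≤ k) (hk : 2 * k + 5 ≤ p) :
    (k + 1) ^ 4 ≤ (p - k) * k ^ 3 := by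
  obtain ⟨d, rfl⟩ : ∃ d, p = k + d := ⟨p - k, by omega⟩
  have hd : d ≥ k + 5 := by omega
  rw [Nat.add_sub_cancel_left]
  rcases le_or_gt k 6 with h | h
  · interval_cases k <;> nlinarith
  · nlinarith [pow_pos (by omega : 0 < k) 3, sq_nonneg k]

private lemma arith_dec {p k : ℕ} (hk : p ≤ 2 * k + 4) (hkp : k ≤ p) :
    (p - k) * k ^ 3 ≤ (k + 1) ^ 4 := by
  obtain ⟨d, rfl⟩ : ∃ d, p = k + d := ⟨p - k, by omega⟩
  have hd : d ≤ k + 4 := by omega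
  rw [Nat.add_sub_cancel_left]
  nlinarith [mul_le_mul_left hd (k ^ 3), sq_nonneg k]

private lemma choose_id (p k : ℕ) : p.choose (k + 1) * (k + 1) = p.choose k * (p - k) :=
  Nat.choose_succ_right_eq p k

private lemma step_inc {p k m : ℕ} (hp : 18 ≤ p) (hm : m = (2 * p - 5) / 4)
    (hk1 : 1 ≤ k) (hk : k + 1 ≤ m) :
    p.choose k * (k + 1) ^ 3 ≤ p.choose (k + 1) * k ^ 3 := by
  have hmod := Nat.div_add_mod (2 * p - 5) 4
  have hmod2 := Nat.mod_lt (2 * p - 5) (show 0 < 4 by norm_num)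
  have hk5 : 2 * k + 5 ≤ p := by omega
  have key : (k + 1) ^ 4 ≤ (p - k) * k ^ 3 := arith_inc hp hk1 hk5
  have h1 : p.choose k * (k + 1) ^ 3 * (k + 1) ≤ p.choose (k + 1) * k ^ 3 * (k + 1) := by
    calc p.choose k * (k + 1) ^ 3 * (k + 1) = p.choose k * (k + 1) ^ 4 := by ring
    _ ≤ p.choose k * ((p - k) * k ^ 3) := Nat.mul_le_mul_left _ key
    _ = p.choose k * (p - k) * k ^ 3 := by ring
    _ = p.choose (k + 1) * (k + 1) * k ^ 3 := by rw [choose_id]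
    _ = p.choose (k + 1) * k ^ 3 * (k + 1) := by ring
  exact Nat.le_of_mul_le_mul_right h1 (by omega)

private lemma step_dec {p k m : ℕ} (hp : 18 ≤ p) (hm : m = (2 * p - 5) / 4)
    (hk : m ≤ k) (hkp : k < p) :
    p.choose (k + 1) * k ^ 3 ≤ p.choose k * (k + 1) ^ 3 := by
  have hmod := Nat.div_add_mod (2 * p - 5) 4
  have hmod2 := Nat.mod_lt (2 * p - 5) (show 0 < 4 by norm_num)
  have hk4 : p ≤ 2 * k + 4 := by omega
  have key : (p - k) * k ^ 3 ≤ (k + 1) ^ 4 := arith_dec hk4 (le_of_lt hkp)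
  have h1 : p.choose (k + 1) * k ^ 3 * (k + 1) ≤ p.choose k * (k + 1) ^ 3 * (k + 1) := by
    calc p.choose (k + 1) * k ^ 3 * (k + 1) = p.choose (k + 1) * (k + 1) * k ^ 3 := by ring
    _ = p.choose k * (p - k) * k ^ 3 := by rw [choose_id]
    _ = p.choose k * ((p - k) * k ^ 3) := by ring
    _ ≤ p.choose k * (k + 1) ^ 4 := Nat.mul_le_mul_left _ key
    _ = p.choose k * (k + 1) ^ 3 * (k + 1) := by ring
  exact Nat.le_of_mul_le_mul_right h1 (by omega)

private lemma upA {p m : ℕ} (hp : 18 ≤ p) (hm : m = (2 * p - 5) / 4) :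
    ∀ i, i < m → p.choose (m - i) * m ^ 3 ≤ p.choose m * (m - i) ^ 3 := by
  intro i
  induction i with
  | zero => intro _; simp
  | succ i ih =>
    intro hi
    set k := m - (i + 1) with hkdef
    have hk1 : 1 ≤ k := by omega
    have hsucc : k + 1 = m - i := by omega
    have hstep : p.choose k * (k + 1) ^ 3 ≤ p.choose (k + 1) * k ^ 3 :=
      step_inc hp hm hk1 (by omega)
    have hih : p.choose (k + 1) * m ^ 3 ≤ p.choose m * (k + 1) ^ 3 := by
      rw [hsucc]; exact ih (by omega)
    have hchain : p.choose k * m ^ 3 * (k + 1) ^ 3 ≤ p.choose m * k ^ 3 * (k + 1) ^ 3 :=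
      calc p.choose k * m ^ 3 * (k + 1) ^ 3 = p.choose k * (k + 1) ^ 3 * m ^ 3 := by ring
      _ ≤ p.choose (k + 1) * k ^ 3 * m ^ 3 := Nat.mul_le_mul_right _ hstep
      _ = p.choose (k + 1) * m ^ 3 * k ^ 3 := by ring
      _ ≤ p.choose m * (k + 1) ^ 3 * k ^ 3 := Nat.mul_le_mul_right _ hih
      _ = p.choose m * k ^ 3 * (k + 1) ^ 3 := by ring
    exact Nat.le_of_mul_le_mul_right hchain (by positivity)

private lemma downB {p m : ℕ} (hp : 18 ≤ p) (hm : m = (2 * p - 5) / 4) :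
    ∀ i, m + i ≤ p → p.choose (m + i) * m ^ 3 ≤ p.choose m * (m + i) ^ 3 := by
  have hmpos : 1 ≤ m := by
    have hmod := Nat.div_add_mod (2 * p - 5) 4
    have hmod2 := Nat.mod_lt (2 * p - 5) (show 0 < 4 by norm_num)
    omega
  intro i
  induction i with
  | zero => intro _; simp
  | succ i ih =>
    intro hi
    set k := m + i with hkdef
    have hstep : p.choose (k + 1) * k ^ 3 ≤ p.choose k * (k + 1) ^ 3 :=
      step_dec hp hm (by omega) (by omega)
    have hih : p.choose k * m ^ 3 ≤ p.choose m * k ^ 3 := ih (by omega)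
    have hadd : m + (i + 1) = k + 1 := by omega
    rw [hadd]
    have hchain : p.choose (k + 1) * m ^ 3 * k ^ 3 ≤ p.choose m * (k + 1) ^ 3 * k ^ 3 :=
      calc p.choose (k + 1) * m ^ 3 * k ^ 3 = p.choose (k + 1) * k ^ 3 * m ^ 3 := by ring
      _ ≤ p.choose k * (k + 1) ^ 3 * m ^ 3 := Nat.mul_le_mul_right _ hstep
      _ = p.choose k * m ^ 3 * (k + 1) ^ 3 := by ring
      _ ≤ p.choose m * k ^ 3 * (k + 1) ^ 3 := Nat.mul_le_mul_right _ hih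
      _ = p.choose m * (k + 1) ^ 3 * k ^ 3 := by ring
    exact Nat.le_of_mul_le_mul_right hchain (by positivity)

end aux

/-- For every integer p ≥ 18, setting k* = ⌊p/2 − 5/4⌋ = ⌊(2p − 5)/4⌋, one has
C(p,k)·(k*)³ ≤ C(p,k*)·k³ for every integer k with 1 ≤ k ≤ p; that is, the
maximum of C(p,k)/k³ over k ∈ {1,…,p} is attained at k* = ⌊p/2 − 5/4⌋. -/
theorem stmt_18 (p k : ℕ) (hp : 18 ≤ p) (hk1 : 1 ≤ k) (hkp : k ≤ p) :
    p.choose k * ((2 * p - 5) / 4) ^ 3 ≤ p.choose ((2 * p - 5) / 4) * k ^ 3 := by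
  set m := (2 * p - 5) / 4 with hm
  have hmod := Nat.div_add_mod (2 * p - 5) 4
  have hmod2 := Nat.mod_lt (2 * p - 5) (show 0 < 4 by norm_num)
  rcases le_or_gt k m with h | h
  · have := upA hp hm (m - k) (by omega)
    have hmk : m - (m - k) = k := by omega
    rwa [hmk] at this
  · have := downB hp hm (k - m) (by omega)
    have hmk : m + (k - m) = k := by omega
    rwa [hmk] at this
end
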